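/- Let G be a profinite group and g ∈ G an element having a countable Engel sink {s₁, s₂, ...}. Then there exist positive integers i, j, an open normal subgroup N of G, and b ∈ G such that [nb, ᵢg] = s_j for all n ∈ N. -/

import Mathlib

/-- The left-normed iterated commutator `[x, ₙg]`: `engel g x 0 = x` and
`engel g x (n+1) = [engel g x n, g] = (engel g x n)⁻¹ * g⁻¹ * (engel g x n) * g`. -/
def engel {G : Type*} [Group G] (g x : G) : ℕ → G
  | 0 => x
  | n + 1 => (engel g x n)⁻¹ * g⁻¹ * engel g x n * g

/-- `E` is an Engel sink of `g`: for every `x` all sufficiently long commutators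
`[x, ₙg]` lie in `E`. -/
def IsEngelSink {G : Type*} [Group G] (g : G) (E : Set G) : Prop :=
  ∀ x : G, ∃ N : ℕ, ∀ n : ℕ, N ≤ n → engel g x n ∈ E

lemma engel_continuous {G : Type*} [Group G] [TopologicalSpace G] [IsTopologicalGroup G]
    (g : G) (n : ℕ) : Continuous (fun x => engel g x n) := by
  induction n with
  | zero => exact continuous_id
  | succ n ih =>
    show Continuous (fun x => (engel g x n)⁻¹ * g⁻¹ * engel g x n * g)
    fun_prop

/-- Let `G` be a profinite group and `g ∈ G` an element with a countable Engel sink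
`{s 0, s 1, ...}`.  Then there are positive integers `i, j`, an open normal subgroup `N`
and `b ∈ G` such that `[n*b, ᵢg] = s j` for all `n ∈ N`. -/
theorem profinite_countable_sink_coset
    {G : Type*} [Group G] [TopologicalSpace G] [IsTopologicalGroup G]
    [CompactSpace G] [T2Space G] [TotallyDisconnectedSpace G]
    (g : G) (s : ℕ → G) (hE : IsEngelSink g (Set.range s)) :
    ∃ (i j : ℕ) (N : Subgroup G) (b : G), 1 ≤ i ∧ N.Normal ∧ IsOpen (N : Set G) ∧
      ∀ n ∈ N, engel g (n * b) i = s j := by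
  set f : ℕ × ℕ → Set G := fun p => {x | engel g x (p.1 + 1) = s p.2} with hf
  have hclosed : ∀ p, IsClosed (f p) := fun p =>
    isClosed_singleton.preimage (engel_continuous g (p.1 + 1))
  have hcover : (⋃ p, f p) = Set.univ := by
    ext x
    simp only [Set.mem_iUnion, Set.mem_univ, iff_true]
    obtain ⟨N, hN⟩ := hE x
    obtain ⟨j, hj⟩ := hN (N + 1) (by omega)
    exact ⟨(N, j), hj.symm⟩
  obtain ⟨p, x₀, hx₀⟩ := nonempty_interior_of_iUnion_of_closed hclosed
    hcover
  -- translate the interior to a neighborhood of 1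
  have hW : IsOpen ((fun y => y * x₀⁻¹) '' interior (f p)) :=
    (isOpenMap_mul_right x₀⁻¹) _ isOpen_interior
  have h1W : (1 : G) ∈ (fun y => y * x₀⁻¹) '' interior (f p) :=
    ⟨x₀, hx₀, mul_inv_cancel x₀⟩
  obtain ⟨V, hVclopen, h1V, hVW⟩ := compact_exists_isClopen_in_isOpen hW h1W
  obtain ⟨H, hH⟩ := IsTopologicalGroup.exist_openNormalSubgroup_sub_clopen_nhds_of_one hVclopen h1V
  refine ⟨p.1 + 1, p.2, H.toSubgroup, x₀, by omega, H.isNormal', H.isOpen', fun n hn => ?_⟩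
  obtain ⟨y, hy, hyx⟩ := hVW (hH hn)
  have : n * x₀ = y := by rw [← hyx]; group
  rw [this]
  have hy' : y ∈ f p := interior_subset hy
  exact hy'
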